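/- There exist real numbers α, β and γ > 0 such that S(x,y) ≥ α + β‖x − y‖ + γ‖x − y‖² for every (x,y) ∈ ℝ^d × ℝ^d. -/

import Mathlib

noncomputable section

/-- Configuration space `ℝ^d` with the Euclidean norm. -/
abbrev Ed (d : ℕ) := EuclideanSpace ℝ (Fin d)

/-- The point of `ℝ^d` with integer coordinates given by `r ∈ ℤ^d`. -/
def intVec (d : ℕ) (r : Fin d → ℤ) : Ed d := WithLp.toLp 2 (fun i => (r i : ℝ))

/-- A generating function: a `C²` map `S : ℝ^d × ℝ^d → ℝ` which is `ℤ^d`-periodic for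
the diagonal action and satisfies the uniform twist condition
`∑_{i,j} ∂²S/∂xᵢ∂yⱼ (x,y) ξᵢ ξⱼ ≤ -A‖ξ‖²` (expressed via the second derivative of `S`
applied to `((ξ,0),(0,ξ))`). -/
def IsGenFn {d : ℕ} (S : Ed d × Ed d → ℝ) : Prop :=
  ContDiff ℝ 2 S ∧
  (∀ (r : Fin d → ℤ) (x y : Ed d), S (x + intVec d r, y + intVec d r) = S (x, y)) ∧
  ∃ A : ℝ, 0 < A ∧ ∀ (x y ξ : Ed d),
    iteratedFDeriv ℝ 2 S (x, y) ![(ξ, 0), (0, ξ)] ≤ -A * ‖ξ‖ ^ 2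

/-- `∂₁S`, the partial differential of `S` with respect to its first variable. -/
def D1 {d : ℕ} (S : Ed d × Ed d → ℝ) (x y : Ed d) : Ed d →L[ℝ] ℝ :=
  fderiv ℝ (fun z => S (z, y)) x

/-- `∂₂S`, the partial differential of `S` with respect to its second variable. -/
def D2 {d : ℕ} (S : Ed d × Ed d → ℝ) (x y : Ed d) : Ed d →L[ℝ] ℝ :=
  fderiv ℝ (fun z => S (x, z)) y

/-- A bi-infinite sequence `(x_n)_{n∈ℤ}` is extremal if
`∂₂S(x_{n-1}, x_n) + ∂₁S(x_n, x_{n+1}) = 0` for every `n`. -/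
def IsExtremal {d : ℕ} (S : Ed d × Ed d → ℝ) (u : ℤ → Ed d) : Prop :=
  ∀ n : ℤ, D2 S (u (n - 1)) (u n) + D1 S (u n) (u (n + 1)) = 0

/-- The action `S(x_0, …, x_n)` of a finite sequence. -/
def act {d : ℕ} (S : Ed d × Ed d → ℝ) (n : ℕ) (γ : ℕ → Ed d) : ℝ :=
  ∑ k ∈ Finset.range n, S (γ k, γ (k + 1))

/-- The sequence `(x, z_1, …, z_{N-1}, y)` built from interior points `z`. -/
def path {d : ℕ} (x y : Ed d) (N : ℕ) (z : Fin (N - 1) → Ed d) : ℕ → Ed d :=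
  fun k => if h0 : k = 0 then x else if h : k < N then z ⟨k - 1, by omega⟩ else y

/-- The fixed-endpoint action `S_{x,y,N} : (x_1, …, x_{N-1}) ↦ S(x, x_1, …, x_{N-1}, y)`. -/
def fixedAct {d : ℕ} (S : Ed d × Ed d → ℝ) (x y : Ed d) (N : ℕ) :
    (Fin (N - 1) → Ed d) → ℝ :=
  fun z => act S N (path x y N z)

/-- `S` has no conjugate points: for all `x, y` and `N ≥ 2`, the fixed-endpoint action
`S_{x,y,N}` has exactly one critical point, and attains its global minimum there. -/
def NoConjPts {d : ℕ} (S : Ed d × Ed d → ℝ) : Prop :=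
  ∀ (x y : Ed d) (N : ℕ), 2 ≤ N →
    ∃ z : Fin (N - 1) → Ed d,
      fderiv ℝ (fixedAct S x y N) z = 0 ∧
      (∀ w, fixedAct S x y N z ≤ fixedAct S x y N w) ∧
      (∀ z', fderiv ℝ (fixedAct S x y N) z' = 0 → z' = z)

/-- `A_N(x,y)`: the minimum of the fixed-endpoint action `S_{x,y,N}` for `N ≥ 2`,
and `S(x,y)` for `N = 1`. -/
def AN {d : ℕ} (S : Ed d × Ed d → ℝ) (N : ℕ) (x y : Ed d) : ℝ :=
  if N ≤ 1 then S (x, y) else sInf (Set.range (fixedAct S x y N))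

/-- The minimizing holonomic value `Σ̃(S)`. -/
def holVal {d : ℕ} (S : Ed d × Ed d → ℝ) : ℝ :=
  sInf { v : ℝ | ∃ n : ℕ, 1 ≤ n ∧ ∃ γ : ℕ → Ed d,
    (∃ r : Fin d → ℤ, γ n - γ 0 = intVec d r) ∧ v = act S n γ / n }

/-- The normalized action `S̃(x_0, …, x_n) = S(x_0, …, x_n) - n Σ̃(S)`. -/
def actTilde {d : ℕ} (S : Ed d × Ed d → ℝ) (n : ℕ) (γ : ℕ → Ed d) : ℝ :=
  act S n γ - n * holVal S

/-- The Mañé potential `π(x,y)`. -/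
def manePot {d : ℕ} (S : Ed d × Ed d → ℝ) (x y : Ed d) : ℝ :=
  sInf { v : ℝ | ∃ n : ℕ, 1 ≤ n ∧ ∃ γ : ℕ → Ed d,
    γ 0 = x ∧ (∃ r : Fin d → ℤ, γ n - y = intVec d r) ∧ v = actTilde S n γ }

/-- The Aubry set `Ā(S) ⊂ ℝ^d × ℝ^d`. -/
def aubry {d : ℕ} (S : Ed d × Ed d → ℝ) : Set (Ed d × Ed d) :=
  { p | ∀ ε > 0, ∃ n : ℕ, 1 ≤ n ∧ ∃ γ : ℕ → Ed d,
      (∃ r : Fin d → ℤ, γ n - γ 0 = intVec d r) ∧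
      ‖p.1 - γ 0‖ < ε ∧ ‖p.2 - γ 1‖ < ε ∧ actTilde S n γ < ε }

/-- The generating function `S_c(x,y) = S(x,y) + c(x - y)` associated to a cohomology
class `c ∈ (ℝ^d)*`. -/
def Sc {d : ℕ} (S : Ed d × Ed d → ℝ) (c : Ed d →L[ℝ] ℝ) : Ed d × Ed d → ℝ :=
  fun p => S p + c (p.1 - p.2)


/-- There exist real numbers `α`, `β` and `γ > 0` such that
`S(x,y) ≥ α + β‖x - y‖ + γ‖x - y‖²` for every `(x,y) ∈ ℝ^d × ℝ^d`. -/
lemma norm_sub_intVec_le (d : ℕ) (u : Ed d) :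
    ∃ r : Fin d → ℤ, ‖u - intVec d r‖ ≤ Real.sqrt d := by
  refine ⟨fun i => ⌊u i⌋, ?_⟩
  rw [EuclideanSpace.norm_eq]
  apply Real.sqrt_le_sqrt
  calc ∑ i, ‖(u - intVec d fun i => ⌊u i⌋) i‖ ^ 2 ≤ ∑ _i : Fin d, (1:ℝ) := by
        apply Finset.sum_le_sum
        intro i _
        have hv : (u - intVec d fun i => ⌊u i⌋) i = Int.fract (u i) := by
          simp only [PiLp.sub_apply, intVec, PiLp.toLp_apply]
          rw [Int.fract]
        rw [hv, Real.norm_eq_abs, abs_of_nonneg (Int.fract_nonneg _)]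
        nlinarith [Int.fract_nonneg (u i), Int.fract_lt_one (u i)]
    _ = d := by simp

lemma fderiv_per {d : ℕ} (S : Ed d × Ed d → ℝ) (hdiff : Differentiable ℝ S)
    (hper : ∀ (r : Fin d → ℤ) (x y : Ed d), S (x + intVec d r, y + intVec d r) = S (x, y))
    (r : Fin d → ℤ) (p : Ed d × Ed d) :
    fderiv ℝ S (p + (intVec d r, intVec d r)) = fderiv ℝ S p := by
  have h1 : HasFDerivAt (fun q : Ed d × Ed d => S (q + (intVec d r, intVec d r)))
      ((fderiv ℝ S (p + (intVec d r, intVec d r))).comp (ContinuousLinearMap.id ℝ _)) p :=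
    (hdiff _).hasFDerivAt.comp p ((hasFDerivAt_id p).add_const _)
  have h2 : (fun q : Ed d × Ed d => S (q + (intVec d r, intVec d r))) = S := by
    funext q
    exact hper r q.1 q.2
  rw [h2, ContinuousLinearMap.comp_id] at h1
  exact h1.fderiv.symm

theorem stmt_0 (d : ℕ) (hd : 1 ≤ d) (S : Ed d × Ed d → ℝ) (hS : IsGenFn S) :
    ∃ α β γ : ℝ, 0 < γ ∧
      ∀ x y : Ed d, α + β * ‖x - y‖ + γ * ‖x - y‖ ^ 2 ≤ S (x, y) := by
  obtain ⟨hC2, hper, A, hA, htwist⟩ := hS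
  have hd1 : Differentiable ℝ S := hC2.differentiable (by norm_num)
  have hΦ : ContDiff ℝ 1 (fderiv ℝ S) := hC2.fderiv_right (by norm_num)
  have hΦd : Differentiable ℝ (fderiv ℝ S) := hΦ.differentiable (by norm_num)
  have hΦc : Continuous (fderiv ℝ S) := hΦ.continuous
  have hΦ'c : Continuous (fderiv ℝ (fderiv ℝ S)) := hΦ.continuous_fderiv (by norm_num)
  -- compact set of diagonal points
  set K : Set (Ed d × Ed d) :=
    (fun u : Ed d => ((u, u) : Ed d × Ed d)) '' Metric.closedBall 0 (Real.sqrt d) with hK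
  have hKc : IsCompact K :=
    (isCompact_closedBall _ _).image (continuous_id.prodMk continuous_id)
  have hKne : K.Nonempty :=
    ⟨(0, 0), ⟨0, Metric.mem_closedBall_self (Real.sqrt_nonneg _), rfl⟩⟩
  obtain ⟨p₀, hp₀K, hp₀⟩ := hKc.exists_isMinOn hKne hC2.continuous.continuousOn
  obtain ⟨p₁, hp₁K, hp₁⟩ := hKc.exists_isMaxOn hKne hΦc.norm.continuousOn
  set m := S p₀ with hm
  set C := ‖fderiv ℝ S p₁‖ with hCdef
  have hC0 : 0 ≤ C := norm_nonneg _
  -- bounds on the diagonal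
  have hdiagmem : ∀ u : Ed d, ∃ w : Ed d, (w, w) ∈ K ∧ (u, u) = (w, w) + (u - w, u - w) ∧
      (∃ r : Fin d → ℤ, u - w = intVec d r) := by
    intro u
    obtain ⟨r, hr⟩ := norm_sub_intVec_le d u
    refine ⟨u - intVec d r, ⟨u - intVec d r, ?_, rfl⟩, by simp, ⟨r, by abel⟩⟩
    simpa [Metric.mem_closedBall, dist_eq_norm] using hr
  have hmS : ∀ u : Ed d, m ≤ S (u, u) := by
    intro u
    obtain ⟨w, hwK, hsplit, r, hrw⟩ := hdiagmem u
    have : S (u, u) = S (w, w) := by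
      rw [hsplit, hrw]
      exact hper r w w
    rw [this]; exact hp₀ hwK
  have hCS : ∀ u : Ed d, ‖fderiv ℝ S (u, u)‖ ≤ C := by
    intro u
    obtain ⟨w, hwK, hsplit, r, hrw⟩ := hdiagmem u
    have : fderiv ℝ S (u, u) = fderiv ℝ S (w, w) := by
      rw [hsplit, hrw]
      exact fderiv_per S hd1 hper r (w, w)
    rw [this]; exact hp₁ hwK
  refine ⟨m, -C, A / 2, by linarith, ?_⟩
  intro x y
  set ξ := y - x with hξ
  have hnx : ‖x - y‖ = ‖ξ‖ := by rw [hξ, norm_sub_rev]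
  -- the function g and its derivative
  set g : ℝ → ℝ := fun t => S (x, x + t • ξ) with hg
  set g' : ℝ → ℝ := fun t => fderiv ℝ S (x, x + t • ξ) ((0 : Ed d), ξ) with hg'
  have hcurve : ∀ t : ℝ, HasDerivAt (fun t : ℝ => ((x, x + t • ξ) : Ed d × Ed d))
      ((0 : Ed d), ξ) t := by
    intro t
    apply HasDerivAt.prodMk (hasDerivAt_const t x)
    simpa using ((hasDerivAt_id t).smul_const ξ).const_add x
  have hgderiv : ∀ t : ℝ, HasDerivAt g (g' t) t := fun t =>
    (hd1 _).hasFDerivAt.comp_hasDerivAt t (hcurve t)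
  have hcurvec : Continuous fun t : ℝ => ((x, x + t • ξ) : Ed d × Ed d) := by
    fun_prop
  have hg'c : Continuous g' := (hΦc.comp hcurvec).clm_apply continuous_const
  have hftc : ∫ t in (0:ℝ)..1, g' t = g 1 - g 0 :=
    intervalIntegral.integral_eq_sub_of_hasDerivAt (fun t _ => hgderiv t)
      (hg'c.intervalIntegrable 0 1)
  -- lower bound on g'
  have hg'lb : ∀ t ∈ Set.Icc (0:ℝ) 1, -C * ‖ξ‖ + (A * ‖ξ‖ ^ 2) * t ≤ g' t := by
    rintro t ⟨ht0, -⟩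
    set h : ℝ → ℝ := fun s => fderiv ℝ S (x + s • ξ, x + t • ξ) ((0 : Ed d), ξ) with hh
    set h' : ℝ → ℝ := fun s =>
      fderiv ℝ (fderiv ℝ S) (x + s • ξ, x + t • ξ) (ξ, (0 : Ed d)) ((0 : Ed d), ξ) with hh'
    have hcurve2 : ∀ s : ℝ, HasDerivAt (fun s : ℝ => ((x + s • ξ, x + t • ξ) : Ed d × Ed d))
        (ξ, (0 : Ed d)) s := by
      intro s
      apply HasDerivAt.prodMk
      · simpa using ((hasDerivAt_id s).smul_const ξ).const_add x
      · exact hasDerivAt_const s _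
    have hhderiv : ∀ s : ℝ, HasDerivAt h (h' s) s := by
      intro s
      have h1 : HasDerivAt (fun s : ℝ => fderiv ℝ S (x + s • ξ, x + t • ξ))
          (fderiv ℝ (fderiv ℝ S) (x + s • ξ, x + t • ξ) (ξ, (0 : Ed d))) s :=
        (hΦd _).hasFDerivAt.comp_hasDerivAt s (hcurve2 s)
      have := h1.clm_apply (hasDerivAt_const s (((0 : Ed d), ξ) : Ed d × Ed d))
      simpa using this
    have hcurve2c : Continuous fun s : ℝ => ((x + s • ξ, x + t • ξ) : Ed d × Ed d) := by
      fun_prop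
    have hh'c : Continuous h' :=
      (((hΦ'c.comp hcurve2c).clm_apply continuous_const).clm_apply continuous_const)
    have hftc2 : ∫ s in (0:ℝ)..t, h' s = h t - h 0 :=
      intervalIntegral.integral_eq_sub_of_hasDerivAt (fun s _ => hhderiv s)
        (hh'c.intervalIntegrable 0 t)
    have htw : ∀ s : ℝ, h' s ≤ -A * ‖ξ‖ ^ 2 := by
      intro s
      have := htwist (x + s • ξ) (x + t • ξ) ξ
      rw [iteratedFDeriv_two_apply] at this
      simpa using this
    have hmono : ∫ s in (0:ℝ)..t, h' s ≤ ∫ s in (0:ℝ)..t, -A * ‖ξ‖ ^ 2 :=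
      intervalIntegral.integral_mono_on ht0 (hh'c.intervalIntegrable 0 t)
        intervalIntegrable_const (fun s _ => htw s)
    rw [hftc2, intervalIntegral.integral_const] at hmono
    simp only [sub_zero, smul_eq_mul] at hmono
    -- h t ≥ -C‖ξ‖
    have hht : -(C * ‖ξ‖) ≤ h t := by
      have hb : |h t| ≤ C * ‖ξ‖ := by
        have h1 : ‖fderiv ℝ S (x + t • ξ, x + t • ξ) (((0 : Ed d), ξ))‖ ≤
            ‖fderiv ℝ S (x + t • ξ, x + t • ξ)‖ * ‖(((0 : Ed d), ξ) : Ed d × Ed d)‖ :=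
          ContinuousLinearMap.le_opNorm _ _
        have h2 : ‖(((0 : Ed d), ξ) : Ed d × Ed d)‖ = ‖ξ‖ := by
          simp [Prod.norm_def]
        rw [h2] at h1
        calc |h t| = ‖fderiv ℝ S (x + t • ξ, x + t • ξ) (((0 : Ed d), ξ))‖ := rfl
          _ ≤ ‖fderiv ℝ S (x + t • ξ, x + t • ξ)‖ * ‖ξ‖ := h1
          _ ≤ C * ‖ξ‖ := by
              apply mul_le_mul_of_nonneg_right (hCS _) (norm_nonneg _)
      linarith [neg_abs_le (h t)]
    have hg'h : g' t = h 0 := by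
      simp only [hg', hh, zero_smul, add_zero]
    rw [hg'h]
    nlinarith
  -- integrate the lower bound
  have hIlow : ∫ t in (0:ℝ)..1, (-C * ‖ξ‖ + (A * ‖ξ‖ ^ 2) * t) ≤ ∫ t in (0:ℝ)..1, g' t := by
    apply intervalIntegral.integral_mono_on (by norm_num)
      (by apply Continuous.intervalIntegrable; fun_prop)
      (hg'c.intervalIntegrable 0 1) hg'lb
  have hIval : ∫ t in (0:ℝ)..1, (-C * ‖ξ‖ + (A * ‖ξ‖ ^ 2) * t) =
      -C * ‖ξ‖ + (A * ‖ξ‖ ^ 2) / 2 := by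
    rw [intervalIntegral.integral_add intervalIntegrable_const
      (by apply Continuous.intervalIntegrable; fun_prop),
      intervalIntegral.integral_const, intervalIntegral.integral_const_mul,
      integral_id]
    simp
    ring
  have hg1 : g 1 = S (x, y) := by
    simp only [hg, one_smul, hξ]
    norm_num
  have hg0 : m ≤ g 0 := by
    simpa [hg] using hmS x
  rw [hIval] at hIlow
  rw [hftc, hg1] at hIlow
  rw [hnx]
  nlinarith [hg0]


end
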